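/- (Type C_n, principal element.) Let n ≥ 2 and let ρ = n e₁ + (n−1) e₂ + ⋯ + 2 e_{n−1} + e_n ∈ ℝ^n. Then the minimum over k ∈ {1, …, n} of ℓ_ρ⁻(ϖ_k) equals n and is attained at k = 1. Moreover, the only linear map of ℝ^n expressible as a composition of at most n simple reflections of type C_n and satisfying ⟨w ϖ₁, ρ⟩ < 0 is w = s_n ∘ s_{n−1} ∘ ⋯ ∘ s₁ (with s₁ applied first), which sends e₁ to −e_n. -/

import Mathlib

open scoped RealInnerProductSpace

/-- The `j`-th simple reflection of type `Cₙ` (`1 ≤ j ≤ n`), acting on `ℝⁿ`: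
for `j < n` it transposes the coordinates numbered `j` and `j+1` (in `1`-based numbering),
and for `j = n` it negates the last coordinate. -/
noncomputable def sC (n j : ℕ) : EuclideanSpace ℝ (Fin n) → EuclideanSpace ℝ (Fin n) :=
  fun v => WithLp.toLp 2 fun i =>
    if j = n then (if (i : ℕ) + 1 = n then -(v i) else v i)
    else if (i : ℕ) + 1 = j then v ⟨j % n, Nat.mod_lt _ i.pos⟩
    else if (i : ℕ) = j then v ⟨(j - 1) % n, Nat.mod_lt _ i.pos⟩
    else v i

/-- The composition of the simple reflections indexed by the entries of `l`
(the last entry of the list is applied first). -/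
noncomputable def compC (n : ℕ) (l : List ℕ) :
    EuclideanSpace ℝ (Fin n) → EuclideanSpace ℝ (Fin n) :=
  l.foldr (fun j g => sC n j ∘ g) id

/-- The fundamental weight `ϖⱼ = e₁ + ⋯ + eⱼ` of type `Cₙ` (`1 ≤ j ≤ n`). -/
noncomputable def wtC (n j : ℕ) : EuclideanSpace ℝ (Fin n) :=
  WithLp.toLp 2 fun i => if (i : ℕ) < j then 1 else 0

/-- `ρ = n·e₁ + (n−1)·e₂ + ⋯ + 2·e_{n−1} + eₙ` of type `Cₙ`. -/
noncomputable def rhoC (n : ℕ) : EuclideanSpace ℝ (Fin n) :=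
  WithLp.toLp 2 fun i => (n : ℝ) - (i : ℕ)

/-- The vector `−eₙ`. -/
noncomputable def negEnC (n : ℕ) : EuclideanSpace ℝ (Fin n) :=
  WithLp.toLp 2 fun i => if (i : ℕ) + 1 = n then -1 else 0


lemma sum_one_point {n : ℕ} (v w : EuclideanSpace ℝ (Fin n)) (a : Fin n)
    (hrest : ∀ i, i ≠ a → w i = v i) (F : ℝ → Fin n → ℝ) :
    ∑ i, F (w i) i = (∑ i, F (v i) i) - F (v a) a + F (w a) a := by
  have h1 : ∀ (u : EuclideanSpace ℝ (Fin n)),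
      ∑ i, F (u i) i = (∑ i ∈ Finset.univ.erase a, F (u i) i) + F (u a) a := by
    intro u
    rw [Finset.sum_erase_add _ _ (Finset.mem_univ a)]
  rw [h1 v, h1 w]
  have h2 : ∑ i ∈ Finset.univ.erase a, F (w i) i = ∑ i ∈ Finset.univ.erase a, F (v i) i := by
    refine Finset.sum_congr rfl (fun i hi => ?_)
    rw [hrest i (Finset.ne_of_mem_erase hi)]
  rw [h2]; ring

lemma sum_two_point {n : ℕ} (v w : EuclideanSpace ℝ (Fin n)) (a b : Fin n) (hab : a ≠ b)
    (ha : w a = v b) (hb : w b = v a)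
    (hrest : ∀ i, i ≠ a → i ≠ b → w i = v i) (F : ℝ → Fin n → ℝ) :
    ∑ i, F (w i) i =
      (∑ i, F (v i) i) - F (v a) a - F (v b) b + F (v b) a + F (v a) b := by
  have key : ∀ (u : EuclideanSpace ℝ (Fin n)),
      ∑ i, F (u i) i =
        (∑ i ∈ (Finset.univ.erase a).erase b, F (u i) i) + F (u a) a + F (u b) b := by
    intro u
    have hbmem : b ∈ Finset.univ.erase a := Finset.mem_erase.2 ⟨hab.symm, Finset.mem_univ b⟩
    rw [← Finset.sum_erase_add _ _ (Finset.mem_univ a), ← Finset.sum_erase_add _ _ hbmem]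
    ring
  rw [key v, key w]
  have h2 : ∑ i ∈ (Finset.univ.erase a).erase b, F (w i) i
      = ∑ i ∈ (Finset.univ.erase a).erase b, F (v i) i := by
    refine Finset.sum_congr rfl (fun i hi => ?_)
    have hib : i ≠ b := Finset.ne_of_mem_erase hi
    have hia : i ≠ a := Finset.ne_of_mem_erase (Finset.mem_of_mem_erase hi)
    rw [hrest i hia hib]
  rw [h2, ha, hb]; ring

lemma sC_spec_swap {n j : ℕ} (hj1 : 1 ≤ j) (hj : j < n) (v : EuclideanSpace ℝ (Fin n)) :
    sC n j v ⟨j - 1, by omega⟩ = v ⟨j, hj⟩ ∧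
    sC n j v ⟨j, hj⟩ = v ⟨j - 1, by omega⟩ ∧
    ∀ i : Fin n, i ≠ ⟨j - 1, by omega⟩ → i ≠ ⟨j, hj⟩ → sC n j v i = v i := by
  have h1 : j % n = j := Nat.mod_eq_of_lt hj
  have h2 : (j - 1) % n = (j - 1) := Nat.mod_eq_of_lt (by omega)
  refine ⟨?_, ?_, ?_⟩
  · show sC n j v ⟨j - 1, by omega⟩ = v ⟨j, hj⟩
    simp only [sC, PiLp.toLp_apply]
    split_ifs <;>
      first
        | rfl
        | omega
        | (exact congrArg v.ofLp (Fin.ext h1))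
        | (exact congrArg v.ofLp (Fin.ext h2))
  · show sC n j v ⟨j, hj⟩ = v ⟨j - 1, by omega⟩
    simp only [sC, PiLp.toLp_apply]
    split_ifs <;>
      first
        | rfl
        | omega
        | (exact congrArg v.ofLp (Fin.ext h1))
        | (exact congrArg v.ofLp (Fin.ext h2))
  · intro i hia hib
    have hilt : (i : ℕ) < n := i.isLt
    have hia' : (i : ℕ) ≠ j - 1 := fun hc => hia (Fin.ext hc)
    have hib' : (i : ℕ) ≠ j := fun hc => hib (Fin.ext hc)
    show sC n j v i = v i
    simp only [sC, PiLp.toLp_apply]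
    split_ifs <;> first | rfl | omega

lemma sC_spec_neg {n : ℕ} (hn : 1 ≤ n) (v : EuclideanSpace ℝ (Fin n)) :
    sC n n v ⟨n - 1, by omega⟩ = -(v ⟨n - 1, by omega⟩) ∧
    ∀ i : Fin n, i ≠ ⟨n - 1, by omega⟩ → sC n n v i = v i := by
  constructor
  · show sC n n v ⟨n - 1, by omega⟩ = -(v ⟨n - 1, by omega⟩)
    simp only [sC, PiLp.toLp_apply]
    split_ifs <;> first | rfl | omega
  · intro i hi
    have hilt : (i : ℕ) < n := i.isLt
    have hi' : (i : ℕ) ≠ n - 1 := fun hc => hi (Fin.ext hc)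
    show sC n n v i = v i
    simp only [sC, PiLp.toLp_apply]
    split_ifs <;> first | rfl | omega

noncomputable def Theta (n : ℕ) (v : EuclideanSpace ℝ (Fin n)) : ℝ :=
  ∑ i, (v i * (i : ℕ) + if v i < 0 then 2 * (n : ℝ) else 0)

def I1 {n : ℕ} (v : EuclideanSpace ℝ (Fin n)) : Prop :=
  ∀ i, v i = -1 ∨ v i = 0 ∨ v i = 1

noncomputable def gT (n : ℕ) (x : ℝ) (i : Fin n) : ℝ :=
  x * (i : ℕ) + if x < 0 then 2 * (n : ℝ) else 0

lemma Theta_def' (n : ℕ) (v : EuclideanSpace ℝ (Fin n)) : Theta n v = ∑ i, gT n (v i) i := rfl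

lemma sC_key (n j : ℕ) (hn : 2 ≤ n) (hj1 : 1 ≤ j) (hjn : j ≤ n)
    (v : EuclideanSpace ℝ (Fin n)) (hv : I1 v) :
    I1 (sC n j v) ∧ (∑ i, |sC n j v i| = ∑ i, |v i|) ∧
      Theta n (sC n j v) ≤ Theta n v + 2 := by
  by_cases h : j = n
  · rw [h]
    obtain ⟨ha, hrest⟩ := sC_spec_neg (show 1 ≤ n by omega) v
    set a : Fin n := ⟨n - 1, by omega⟩ with hadef
    have hacast : ((a : ℕ) : ℝ) = (n : ℝ) - 1 := by
      have : (a : ℕ) = n - 1 := rfl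
      rw [this, Nat.cast_sub (by omega)]; norm_num
    refine ⟨?_, ?_, ?_⟩
    · intro i
      by_cases hia : i = a
      · rw [hia, ha]; rcases hv a with h' | h' | h' <;> rw [h'] <;> norm_num
      · rw [hrest i hia]; exact hv i
    · have h1p := sum_one_point v (sC n n v) a hrest (fun x (_ : Fin n) => |x|)
      simp only at h1p
      rw [h1p, ha, abs_neg]; ring
    · rw [Theta_def', Theta_def', sum_one_point v (sC n n v) a hrest (gT n), ha]
      have hub : gT n (-(v a)) a - gT n (v a) a ≤ 2 := by
        rcases hv a with h' | h' | h' <;> rw [h'] <;> simp only [gT, hacast] <;>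
          norm_num <;> linarith
      linarith
  · have hj : j < n := lt_of_le_of_ne hjn h
    obtain ⟨ha, hb, hrest⟩ := sC_spec_swap hj1 hj v
    set a : Fin n := ⟨j - 1, by omega⟩ with hadef
    set b : Fin n := ⟨j, hj⟩ with hbdef
    have hab : a ≠ b := by
      intro hc
      have : j - 1 = j := congrArg Fin.val hc
      omega
    refine ⟨?_, ?_, ?_⟩
    · intro i
      by_cases hia : i = a
      · rw [hia, ha]; exact hv b
      · by_cases hib : i = b
        · rw [hib, hb]; exact hv a
        · rw [hrest i hia hib]; exact hv i
    · have h2p := sum_two_point v (sC n j v) a b hab ha hb hrest (fun x (_ : Fin n) => |x|)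
      simp only at h2p
      rw [h2p]; ring
    · rw [Theta_def', Theta_def', sum_two_point v (sC n j v) a b hab ha hb hrest (gT n)]
      have hval : ((b : ℕ) : ℝ) = ((a : ℕ) : ℝ) + 1 := by
        have hh : (b : ℕ) = (a : ℕ) + 1 := by
          have h1 : (b : ℕ) = j := rfl
          have h2 : (a : ℕ) = j - 1 := rfl
          omega
        exact_mod_cast hh
      have key : gT n (v b) a + gT n (v a) b - gT n (v a) a - gT n (v b) b
          = v a - v b := by
        simp only [gT, hval]; ring
      have hbd : v a - v b ≤ 2 := by
        rcases hv a with h' | h' | h' <;> rcases hv b with h'' | h'' | h'' <;>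
          rw [h', h''] <;> norm_num
      linarith

lemma inner_rho (n : ℕ) (v : EuclideanSpace ℝ (Fin n)) :
    ⟪v, rhoC n⟫ = ∑ i, v i * ((n : ℝ) - (i : ℕ)) := by
  rw [PiLp.inner_apply]
  simp [RCLike.inner_apply, rhoC, mul_comm]

lemma theta_eq (n : ℕ) (v : EuclideanSpace ℝ (Fin n)) (hv : I1 v) :
    Theta n v = (n : ℝ) * (∑ i, |v i|) - ⟪v, rhoC n⟫ := by
  rw [inner_rho, Theta_def', Finset.mul_sum, ← Finset.sum_sub_distrib]
  refine Finset.sum_congr rfl (fun i _ => ?_)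
  rcases hv i with h' | h' | h' <;> rw [h'] <;> simp only [gT] <;> norm_num <;> ring

lemma compC_cons (n j : ℕ) (l : List ℕ) (v : EuclideanSpace ℝ (Fin n)) :
    compC n (j :: l) v = sC n j (compC n l v) := rfl

lemma compC_key (n : ℕ) (hn : 2 ≤ n) (l : List ℕ) (hl : ∀ m ∈ l, 1 ≤ m ∧ m ≤ n)
    (v : EuclideanSpace ℝ (Fin n)) (hv : I1 v) :
    I1 (compC n l v) ∧ (∑ i, |compC n l v i| = ∑ i, |v i|) ∧
      Theta n (compC n l v) ≤ Theta n v + 2 * l.length := by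
  induction l with
  | nil => refine ⟨hv, rfl, by simp [compC]⟩
  | cons j l ih =>
    obtain ⟨h1, h2, h3⟩ := ih (fun m hm => hl m (List.mem_cons_of_mem _ hm))
    obtain ⟨hj1, hj2⟩ := hl j (List.mem_cons_self)
    obtain ⟨k1, k2, k3⟩ := sC_key n j hn hj1 hj2 _ h1
    rw [compC_cons]
    refine ⟨k1, by rw [k2, h2], ?_⟩
    have : (((j :: l).length : ℕ) : ℝ) = (l.length : ℝ) + 1 := by
      simp
    rw [this]
    linarith

lemma wtC_I1 (n k : ℕ) : I1 (wtC n k) := by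
  intro i
  simp only [wtC, PiLp.toLp_apply]
  split_ifs <;> norm_num

lemma sum_range_indicator (k n : ℕ) (hk : k ≤ n) :
    ∑ i ∈ Finset.range n, (if i < k then (1 : ℝ) else 0) = (k : ℝ) := by
  induction n with
  | zero =>
    have : k = 0 := by omega
    simp [this]
  | succ m ih =>
    rw [Finset.sum_range_succ]
    by_cases h : k ≤ m
    · rw [ih h, if_neg (by omega)]; ring
    · have hk' : k = m + 1 := by omega
      have hc : ∀ i ∈ Finset.range m, (if i < k then (1 : ℝ) else 0) = 1 := by
        intro i hi
        rw [if_pos (by simp at hi; omega)]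
      rw [Finset.sum_congr rfl hc, Finset.sum_const, if_pos (by omega)]
      simp [hk']

lemma wtC_abs_sum (n k : ℕ) (hk : k ≤ n) : ∑ i, |wtC n k i| = (k : ℝ) := by
  have h1 : ∀ i : Fin n, |wtC n k i| = if (i : ℕ) < k then (1 : ℝ) else 0 := by
    intro i
    simp only [wtC, PiLp.toLp_apply]
    split_ifs <;> norm_num
  rw [Finset.sum_congr rfl (fun i _ => h1 i), Fin.sum_univ_eq_sum_range
    (fun i => if i < k then (1 : ℝ) else 0) n]
  exact sum_range_indicator k n hk

lemma inner_wt_ge (n k : ℕ) (hn : 2 ≤ n) (hk2 : 2 ≤ k) :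
    2 * (n : ℝ) - 1 ≤ ⟪wtC n k, rhoC n⟫ := by
  rw [inner_rho]
  have hterm : ∀ i : Fin n, (0 : ℝ) ≤ wtC n k i * ((n : ℝ) - (i : ℕ)) := by
    intro i
    have hilt : ((i : ℕ) : ℝ) < (n : ℝ) := by exact_mod_cast i.isLt
    simp only [wtC, PiLp.toLp_apply]
    split_ifs <;> nlinarith
  have h0 : (⟨0, by omega⟩ : Fin n) ≠ (⟨1, by omega⟩ : Fin n) := by
    intro hc
    exact absurd (congrArg Fin.val hc) (by norm_num)
  have hsub : ({⟨0, by omega⟩, ⟨1, by omega⟩} : Finset (Fin n)) ⊆ Finset.univ :=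
    Finset.subset_univ _
  have hS := Finset.sum_le_sum_of_subset_of_nonneg hsub
    (fun i _ _ => hterm i)
  rw [Finset.sum_pair h0] at hS
  have e0 : wtC n (k) (⟨0, by omega⟩ : Fin n) = 1 := by
    simp only [wtC, PiLp.toLp_apply]; rw [if_pos (by omega)]
  have e1 : wtC n (k) (⟨1, by omega⟩ : Fin n) = 1 := by
    simp only [wtC, PiLp.toLp_apply]; rw [if_pos (by omega)]
  rw [e0, e1] at hS
  have c0 : (((⟨0, by omega⟩ : Fin n) : ℕ) : ℝ) = 0 := by norm_num
  have c1 : (((⟨1, by omega⟩ : Fin n) : ℕ) : ℝ) = 1 := by norm_num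
  rw [c0, c1] at hS
  linarith

lemma length_bound_ge2 (n k : ℕ) (hn : 2 ≤ n) (hk2 : 2 ≤ k) (hkn : k ≤ n)
    (l : List ℕ) (hl : ∀ m ∈ l, 1 ≤ m ∧ m ≤ n)
    (hneg : ⟪compC n l (wtC n k), rhoC n⟫ < 0) : n ≤ l.length := by
  obtain ⟨h1, h2, h3⟩ := compC_key n hn l hl (wtC n k) (wtC_I1 n k)
  have habs : ∑ i, |wtC n k i| = (k : ℝ) := wtC_abs_sum n k hkn
  have e1 : Theta n (compC n l (wtC n k))
      = (n : ℝ) * k - ⟪compC n l (wtC n k), rhoC n⟫ := by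
    rw [theta_eq _ _ h1, h2, habs]
  have e2 : Theta n (wtC n k) = (n : ℝ) * k - ⟪wtC n k, rhoC n⟫ := by
    rw [theta_eq _ _ (wtC_I1 n k), habs]
  have hphi := inner_wt_ge n k hn hk2
  have hlen : 2 * (n : ℝ) - 1 < 2 * (l.length : ℝ) := by
    rw [e1, e2] at h3
    linarith
  by_contra hcon
  push_neg at hcon
  have : (l.length : ℝ) ≤ (n : ℝ) - 1 := by
    have h' : l.length ≤ n - 1 := by omega
    have : ((l.length : ℕ) : ℝ) ≤ ((n - 1 : ℕ) : ℝ) := by exact_mod_cast h'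
    rwa [Nat.cast_sub (by omega), Nat.cast_one] at this
  linarith

noncomputable def vecT (n t : ℕ) : EuclideanSpace ℝ (Fin n) :=
  WithLp.toLp 2 fun i => if (i : ℕ) = t then 1 else if (i : ℕ) + t = 2 * n - 1 then -1 else 0

def stepT (n j t : ℕ) : ℕ :=
  if j = n then (if t = n - 1 then n else if t = n then n - 1 else t)
  else if t + 1 = j then j
  else if t = j then j - 1
  else if t + j = 2 * n - 1 then 2 * n - j
  else if t + j = 2 * n then t - 1
  else t

def tOf (n : ℕ) (l : List ℕ) : ℕ := l.foldr (fun j t => stepT n j t) 0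

lemma stepT_le (n j t : ℕ) (hn : 2 ≤ n) (hj1 : 1 ≤ j) (hjn : j ≤ n) (ht : t ≤ 2 * n - 1) :
    stepT n j t ≤ 2 * n - 1 := by
  unfold stepT; split_ifs <;> omega

lemma stepT_succ_le (n j t : ℕ) (hj1 : 1 ≤ j) (hjn : j ≤ n) :
    stepT n j t ≤ t + 1 := by
  unfold stepT; split_ifs <;> omega

lemma stepT_eq_succ (n j t : ℕ) (hn : 2 ≤ n) (hj1 : 1 ≤ j) (hjn : j ≤ n) (ht : t + 1 ≤ n)
    (h : stepT n j t = t + 1) : j = t + 1 := by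
  unfold stepT at h; split_ifs at h <;> omega

set_option maxHeartbeats 1000000 in
lemma sC_vecT (n j t : ℕ) (hn : 2 ≤ n) (hj1 : 1 ≤ j) (hjn : j ≤ n) (ht : t ≤ 2 * n - 1) :
    sC n j (vecT n t) = vecT n (stepT n j t) := by
  ext i
  have hi : (i : ℕ) < n := i.isLt
  by_cases h : j = n
  · subst h
    simp only [sC, vecT, stepT, if_pos rfl, PiLp.toLp_apply]
    split_ifs <;> (try norm_num) <;> omega
  · have hj' : j < n := lt_of_le_of_ne hjn h
    have h1 : j % n = j := Nat.mod_eq_of_lt hj'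
    have h2 : (j - 1) % n = j - 1 := Nat.mod_eq_of_lt (by omega)
    unfold stepT
    rw [if_neg h]
    split_ifs with c1 c2 c3 c4 <;>
      (simp only [sC, vecT, if_neg h, h1, h2, PiLp.toLp_apply] ; split_ifs <;> (try norm_num) <;> omega)

lemma vecT_zero (n : ℕ) (hn : 2 ≤ n) : vecT n 0 = wtC n 1 := by
  ext i
  have hi : (i : ℕ) < n := i.isLt
  simp only [vecT, wtC, PiLp.toLp_apply]
  split_ifs <;> (try norm_num) <;> omega

lemma vecT_single_lt (n t : ℕ) (hn : 2 ≤ n) (h : t < n) :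
    vecT n t = EuclideanSpace.single (⟨t, h⟩ : Fin n) (1 : ℝ) := by
  ext i
  have hi : (i : ℕ) < n := i.isLt
  simp only [vecT, EuclideanSpace.single_apply, Fin.ext_iff, PiLp.toLp_apply]
  split_ifs <;> (try rfl) <;> omega

lemma vecT_single_ge (n t : ℕ) (hn : 2 ≤ n) (h1 : n ≤ t) (h2 : t ≤ 2 * n - 1) :
    vecT n t = EuclideanSpace.single (⟨2 * n - 1 - t, by omega⟩ : Fin n) (-1 : ℝ) := by
  ext i
  have hi : (i : ℕ) < n := i.isLt
  simp only [vecT, EuclideanSpace.single_apply, Fin.ext_iff, PiLp.toLp_apply]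
  split_ifs <;> (try rfl) <;> omega

lemma inner_vecT (n t : ℕ) (hn : 2 ≤ n) (ht : t ≤ 2 * n - 1) :
    ⟪vecT n t, rhoC n⟫ = if t < n then ((n : ℝ) - t) else ((n : ℝ) - 1 - t) := by
  by_cases h : t < n
  · rw [if_pos h, vecT_single_lt n t hn h, EuclideanSpace.inner_single_left]
    simp [rhoC]
  · rw [if_neg h, vecT_single_ge n t hn (by omega) ht, EuclideanSpace.inner_single_left]
    simp only [rhoC, map_neg, map_one, PiLp.toLp_apply]
    have : ((⟨2 * n - 1 - t, by omega⟩ : Fin n) : ℝ) = 2 * (n : ℝ) - 1 - t := by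
      show (((2 * n - 1 - t : ℕ) : ℝ)) = _
      rw [Nat.cast_sub ht, Nat.cast_sub (by omega : 1 ≤ 2 * n)]
      push_cast; ring
    rw [this]; ring

lemma compC_vecT (n : ℕ) (hn : 2 ≤ n) (l : List ℕ) (hl : ∀ m ∈ l, 1 ≤ m ∧ m ≤ n) :
    compC n l (wtC n 1) = vecT n (tOf n l) ∧ tOf n l ≤ 2 * n - 1 ∧ tOf n l ≤ l.length := by
  induction l with
  | nil =>
    have h0 : tOf n ([] : List ℕ) = 0 := rfl
    refine ⟨(vecT_zero n hn).symm, by omega, by omega⟩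
  | cons j l ih =>
    obtain ⟨e1, e2, e3⟩ := ih (fun m hm => hl m (List.mem_cons_of_mem _ hm))
    obtain ⟨hj1, hj2⟩ := hl j (List.mem_cons_self)
    have ht : tOf n (j :: l) = stepT n j (tOf n l) := rfl
    refine ⟨?_, ?_, ?_⟩
    · rw [compC_cons, e1, sC_vecT n j (tOf n l) hn hj1 hj2 e2, ht]
    · rw [ht]; exact stepT_le n j (tOf n l) hn hj1 hj2 e2
    · rw [ht]
      have := stepT_succ_le n j (tOf n l) hj1 hj2
      simpa using by omega

def listDesc : ℕ → List ℕ
  | 0 => []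
  | (m + 1) => (m + 1) :: listDesc m

lemma listDesc_length (m : ℕ) : (listDesc m).length = m := by
  induction m with
  | zero => rfl
  | succ k ih => simp [listDesc, ih]

lemma listDesc_mem (n m : ℕ) (h : m ≤ n) : ∀ x ∈ listDesc m, 1 ≤ x ∧ x ≤ n := by
  induction m with
  | zero => intro x hx; simp [listDesc] at hx
  | succ k ih =>
    intro x hx
    rcases List.mem_cons.1 hx with h' | h'
    · omega
    · exact ih (by omega) x h'

lemma listDesc_eq (n : ℕ) : listDesc n = (List.range n).map (fun i => n - i) := by
  induction n with
  | zero => rfl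
  | succ m ih =>
    rw [List.range_succ_eq_map, List.map_cons, List.map_map]
    have hc : ((fun i => m + 1 - i) ∘ Nat.succ) = fun i => m - i := by
      funext i; simp [Function.comp]
    rw [hc, ← ih]
    simp [listDesc]

lemma tOf_listDesc (n : ℕ) (hn : 2 ≤ n) : ∀ m, m ≤ n → tOf n (listDesc m) = m := by
  intro m
  induction m with
  | zero => intro _; rfl
  | succ k ih =>
    intro hk
    have h1 : tOf n (listDesc (k + 1)) = stepT n (k + 1) (tOf n (listDesc k)) := rfl
    rw [h1, ih (by omega)]
    unfold stepT
    split_ifs <;> omega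

lemma unique_aux (n : ℕ) (hn : 2 ≤ n) (l : List ℕ) (hl : ∀ m ∈ l, 1 ≤ m ∧ m ≤ n) :
    l.length ≤ n → tOf n l = l.length → l = listDesc l.length := by
  induction l with
  | nil => intro _ _; rfl
  | cons j l ih =>
    intro hlen htof
    have hl' : ∀ m ∈ l, 1 ≤ m ∧ m ≤ n := fun m hm => hl m (List.mem_cons_of_mem _ hm)
    obtain ⟨hj1, hj2⟩ := hl j (List.mem_cons_self)
    have e3 : tOf n l ≤ l.length := (compC_vecT n hn l hl').2.2
    have ht : tOf n (j :: l) = stepT n j (tOf n l) := rfl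
    have hsucc := stepT_succ_le n j (tOf n l) hj1 hj2
    have hlc : (j :: l).length = l.length + 1 := rfl
    have htofl : tOf n l = l.length := by omega
    have hstep : stepT n j (tOf n l) = tOf n l + 1 := by omega
    have hj : j = tOf n l + 1 :=
      stepT_eq_succ n j (tOf n l) hn hj1 hj2 (by omega) hstep
    have ihl := ih hl' (by omega) htofl
    rw [hlc]
    show j :: l = listDesc (l.length + 1)
    rw [show listDesc (l.length + 1) = (l.length + 1) :: listDesc l.length from rfl,
      ← ihl, ← htofl, ← hj]

lemma k1_main (n : ℕ) (hn : 2 ≤ n) (l : List ℕ) (hl : ∀ m ∈ l, 1 ≤ m ∧ m ≤ n)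
    (hneg : ⟪compC n l (wtC n 1), rhoC n⟫ < 0) :
    n ≤ tOf n l ∧ n ≤ l.length := by
  obtain ⟨e1, e2, e3⟩ := compC_vecT n hn l hl
  rw [e1, inner_vecT n (tOf n l) hn e2] at hneg
  have h1 : ¬ (tOf n l < n) := by
    intro hc
    rw [if_pos hc] at hneg
    have : ((tOf n l : ℕ) : ℝ) < (n : ℝ) := by exact_mod_cast hc
    linarith
  have h2 : n ≤ tOf n l := by omega
  exact ⟨h2, le_trans h2 e3⟩

lemma vecT_n_eq (n : ℕ) (hn : 2 ≤ n) :
    vecT n n = (WithLp.toLp 2 fun i => if (i : ℕ) + 1 = n then -1 else 0 :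
      EuclideanSpace ℝ (Fin n)) := by
  ext i
  have hi : (i : ℕ) < n := i.isLt
  simp only [vecT, PiLp.toLp_apply]
  split_ifs <;> (try rfl) <;> omega

theorem statement11 (n : ℕ) (hn : 2 ≤ n) :
    IsLeast {k : ℕ | ∃ l : List ℕ, (∀ m ∈ l, 1 ≤ m ∧ m ≤ n) ∧ l.length = k ∧
        ⟪compC n l (wtC n 1), rhoC n⟫ < 0} n ∧
    (∀ k, 1 ≤ k → k ≤ n → ∀ l : List ℕ, (∀ m ∈ l, 1 ≤ m ∧ m ≤ n) →
        ⟪compC n l (wtC n k), rhoC n⟫ < 0 → n ≤ l.length) ∧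
    (∀ l : List ℕ, (∀ m ∈ l, 1 ≤ m ∧ m ≤ n) → l.length ≤ n →
        ⟪compC n l (wtC n 1), rhoC n⟫ < 0 →
        compC n l = compC n ((List.range n).map (fun i => n - i))) ∧
    compC n ((List.range n).map (fun i => n - i)) (wtC n 1) = negEnC n := by
  have hmap : listDesc n = (List.range n).map (fun i => n - i) := listDesc_eq n
  have hldmem : ∀ x ∈ listDesc n, 1 ≤ x ∧ x ≤ n := listDesc_mem n n le_rfl
  have hldlen : (listDesc n).length = n := listDesc_length n
  have hcomp := compC_vecT n hn (listDesc n) hldmem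
  have htld : tOf n (listDesc n) = n := tOf_listDesc n hn n le_rfl
  have hval : compC n (listDesc n) (wtC n 1) = vecT n n := by rw [hcomp.1, htld]
  have hinner : ⟪compC n (listDesc n) (wtC n 1), rhoC n⟫ < 0 := by
    rw [hval, inner_vecT n n hn (by omega), if_neg (lt_irrefl n)]
    linarith
  refine ⟨⟨?_, ?_⟩, ?_, ?_, ?_⟩
  · refine ⟨(List.range n).map (fun i => n - i), ?_, ?_, ?_⟩
    · intro m hm
      rw [← hmap] at hm
      exact hldmem m hm
    · rw [← hmap, hldlen]
    · rw [← hmap]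
      exact hinner
  · rintro k ⟨l, hlm, hlen, hneg⟩
    have h := (k1_main n hn l hlm hneg).2
    omega
  · intro k hk1 hkn l hlm hneg
    by_cases hk : k = 1
    · subst hk
      exact (k1_main n hn l hlm hneg).2
    · exact length_bound_ge2 n k hn (by omega) hkn l hlm hneg
  · intro l hlm hlen hneg
    obtain ⟨h2, _⟩ := k1_main n hn l hlm hneg
    have e3 : tOf n l ≤ l.length := (compC_vecT n hn l hlm).2.2
    have heq : tOf n l = l.length := by omega
    have hleq : l = listDesc l.length := unique_aux n hn l hlm hlen heq
    have hlenn : l.length = n := by omega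
    rw [hleq, hlenn, hmap]
  · rw [← hmap, hval, vecT_n_eq n hn]
    rfl
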